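/- The bounded operators Z₁,…,Z_N on H = ℓ²((ℕ^ℓ) × ℤ) satisfy: Z_{j+1}* Z_{j+1} − Z_{j+1} Z_{j+1}* = (1 − q²)·Σ_{i=1}^{j} Z_i Z_i* for every j ∈ {1,…,ℓ}; Z₁* Z₁ = Z₁ Z₁*; and Σ_{i=1}^{N} Z_i Z_i* = 1 (the identity operator on H). -/

import Mathlib

noncomputable section

/-- The Hilbert space `ℓ²((ℕ^ℓ) × ℤ)`. -/
abbrev Hsp (ℓ : ℕ) := lp (fun _ : (Fin ℓ → ℕ) × ℤ => ℂ) 2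

/-- The standard orthonormal basis vector `e_{(n,m)}` of `ℓ²((ℕ^ℓ) × ℤ)`. -/
def eVec (ℓ : ℕ) (p : (Fin ℓ → ℕ) × ℤ) : Hsp ℓ := lp.single 2 p 1

namespace SphereAux

open scoped InnerProductSpace

variable {ℓ : ℕ}

lemma coord (x : Hsp ℓ) (p : (Fin ℓ → ℕ) × ℤ) : ⟪eVec ℓ p, x⟫_ℂ = x p := by
  rw [eVec, lp.inner_single_left]
  simp [inner]

lemma inner_eVec (a b : (Fin ℓ → ℕ) × ℤ) :
    ⟪eVec ℓ a, eVec ℓ b⟫_ℂ = if b = a then 1 else 0 := by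
  rw [coord, eVec, lp.single_apply]
  rcases eq_or_ne b a with h | h
  · subst h; simp
  · simp [h, Ne.symm h]

lemma vext {x y : Hsp ℓ} (h : ∀ p, ⟪eVec ℓ p, x⟫_ℂ = ⟪eVec ℓ p, y⟫_ℂ) : x = y := by
  apply lp.ext
  funext p
  have := h p
  rwa [coord, coord] at this

lemma cext {A B : Hsp ℓ →L[ℂ] Hsp ℓ} (h : ∀ p, A (eVec ℓ p) = B (eVec ℓ p)) : A = B := by
  apply ContinuousLinearMap.ext
  intro x
  have hs := lp.hasSum_single (E := fun _ : (Fin ℓ → ℕ) × ℤ => ℂ) (p := 2) (by norm_num) x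
  have key : ∀ p : (Fin ℓ → ℕ) × ℤ, A (lp.single 2 p (x p)) = B (lp.single 2 p (x p)) := by
    intro p
    have h1 : lp.single 2 p (x p) = (x p) • eVec ℓ p := by
      rw [eVec, ← lp.single_smul, smul_eq_mul, mul_one]
    rw [h1, map_smul, map_smul, h p]
  have hA : HasSum (fun p => A (lp.single 2 p (x p))) (A x) := hs.mapL A
  have hB : HasSum (fun p => B (lp.single 2 p (x p))) (B x) := hs.mapL B
  exact hA.unique (by simpa only [key] using hB)


def Sx (ℓ t : ℕ) (n : Fin ℓ → ℕ) : ℕ :=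
  ∑ i ∈ Finset.univ.filter (fun i : Fin ℓ => (i : ℕ) < t), n i

lemma Sx_congr {t : ℕ} {f g : Fin ℓ → ℕ} (h : ∀ i : Fin ℓ, (i : ℕ) < t → f i = g i) :
    Sx ℓ t f = Sx ℓ t g :=
  Finset.sum_congr rfl fun i hi => h i (Finset.mem_filter.mp hi).2

lemma Sx_update {t : ℕ} (n : Fin ℓ → ℕ) (k : Fin ℓ) (v : ℕ) (hk : ¬ (k : ℕ) < t) :
    Sx ℓ t (Function.update n k v) = Sx ℓ t n :=
  Sx_congr fun i hi => Function.update_of_ne (fun he => hk (by subst he; exact hi)) _ _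

lemma Sx_succ {t : ℕ} (ht : t < ℓ) (n : Fin ℓ → ℕ) :
    Sx ℓ (t + 1) n = Sx ℓ t n + n ⟨t, ht⟩ := by
  rw [Sx, Sx]
  have h : Finset.univ.filter (fun i : Fin ℓ => (i : ℕ) < t + 1)
      = insert (⟨t, ht⟩ : Fin ℓ) (Finset.univ.filter (fun i : Fin ℓ => (i : ℕ) < t)) := by
    ext i
    simp only [Finset.mem_filter, Finset.mem_insert, Finset.mem_univ, true_and, Fin.ext_iff]
    omega
  rw [h, Finset.sum_insert (by simp)]
  ring

lemma Sx_top (n : Fin ℓ → ℕ) : Sx ℓ ℓ n = ∑ i, n i := by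
  rw [Sx, Finset.filter_true_of_mem fun i _ => i.isLt]

variable {q : ℝ} {Z : Fin (ℓ + 1) → (Hsp ℓ →L[ℂ] Hsp ℓ)}

/-- Normalized form of the hypothesis `hZj`. -/
lemma hZj' (hZj : ∀ (j : Fin (ℓ + 1)) (hj : 1 ≤ (j : ℕ)) (n : Fin ℓ → ℕ) (m : ℤ),
      Z j (eVec ℓ (n, m))
        = (((q : ℂ) ^ (∑ i ∈ Finset.univ.filter (fun i : Fin ℓ => (i : ℕ) < ℓ - (j : ℕ)), n i))
            * ((Real.sqrt (1 - q ^ (2 * (n ⟨ℓ - (j : ℕ), Nat.sub_lt_self hj (Nat.le_of_lt_succ j.isLt)⟩ + 1))) : ℝ) : ℂ))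
          • eVec ℓ (Function.update n ⟨ℓ - (j : ℕ), Nat.sub_lt_self hj (Nat.le_of_lt_succ j.isLt)⟩
              (n ⟨ℓ - (j : ℕ), Nat.sub_lt_self hj (Nat.le_of_lt_succ j.isLt)⟩ + 1), m))
    (j : Fin (ℓ + 1)) (hj : 1 ≤ (j : ℕ)) (k : Fin ℓ) (hk : (k : ℕ) = ℓ - (j : ℕ))
    (n : Fin ℓ → ℕ) (m : ℤ) :
    Z j (eVec ℓ (n, m))
      = (((q ^ (Sx ℓ (k : ℕ) n) * Real.sqrt (1 - q ^ (2 * (n k + 1)))) : ℝ) : ℂ)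
        • eVec ℓ (Function.update n k (n k + 1), m) := by
  have hkeq : k = ⟨ℓ - (j : ℕ), by have := j.isLt; omega⟩ := Fin.ext hk
  rw [hkeq, hZj j hj n m]
  congr 1
  push_cast [Sx]
  ring


lemma adj0 (hZ0 : ∀ (n : Fin ℓ → ℕ) (m : ℤ),
      Z 0 (eVec ℓ (n, m)) = ((q : ℂ) ^ (∑ i, n i)) • eVec ℓ (n, m + 1))
    (n : Fin ℓ → ℕ) (m : ℤ) :
    ContinuousLinearMap.adjoint (Z 0) (eVec ℓ (n, m))
      = ((q : ℂ) ^ (∑ i, n i)) • eVec ℓ (n, m - 1) := by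
  apply vext
  rintro ⟨r1, r2⟩
  rw [ContinuousLinearMap.adjoint_inner_right, hZ0 r1 r2, inner_smul_left,
    inner_smul_right, inner_eVec, inner_eVec]
  by_cases h : r1 = n ∧ r2 = m - 1
  · obtain ⟨h1, h2⟩ := h
    have c1 : ((n, m) : (Fin ℓ → ℕ) × ℤ) = (r1, r2 + 1) := by
      rw [Prod.mk.injEq]
      exact ⟨h1.symm, by omega⟩
    have c2 : ((n, m - 1) : (Fin ℓ → ℕ) × ℤ) = (r1, r2) := by
      rw [Prod.mk.injEq]
      exact ⟨h1.symm, by omega⟩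
    rw [if_pos c1, if_pos c2, map_pow, Complex.conj_ofReal, h1]
  · have c1 : ¬ (((n, m) : (Fin ℓ → ℕ) × ℤ) = (r1, r2 + 1)) := by
      intro he
      rw [Prod.mk.injEq] at he
      exact h ⟨he.1.symm, by omega⟩
    have c2 : ¬ (((n, m - 1) : (Fin ℓ → ℕ) × ℤ) = (r1, r2)) := by
      intro he
      rw [Prod.mk.injEq] at he
      exact h ⟨he.1.symm, by omega⟩
    rw [if_neg c1, if_neg c2, mul_zero, mul_zero]

lemma adjj (hZj : ∀ (j : Fin (ℓ + 1)) (hj : 1 ≤ (j : ℕ)) (k : Fin ℓ), (k : ℕ) = ℓ - (j : ℕ) →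
      ∀ (n : Fin ℓ → ℕ) (m : ℤ),
      Z j (eVec ℓ (n, m))
        = (((q ^ (Sx ℓ (k : ℕ) n) * Real.sqrt (1 - q ^ (2 * (n k + 1)))) : ℝ) : ℂ)
          • eVec ℓ (Function.update n k (n k + 1), m))
    (j : Fin (ℓ + 1)) (hj : 1 ≤ (j : ℕ)) (k : Fin ℓ) (hk : (k : ℕ) = ℓ - (j : ℕ))
    (n : Fin ℓ → ℕ) (m : ℤ) :
    ContinuousLinearMap.adjoint (Z j) (eVec ℓ (n, m))
      = (((q ^ (Sx ℓ (k : ℕ) n) * Real.sqrt (1 - q ^ (2 * n k))) : ℝ) : ℂ)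
        • eVec ℓ (Function.update n k (n k - 1), m) := by
  apply vext
  rintro ⟨r1, r2⟩
  rw [ContinuousLinearMap.adjoint_inner_right, hZj j hj k hk r1 r2, inner_smul_left,
    inner_smul_right, inner_eVec, inner_eVec, Complex.conj_ofReal]
  by_cases h : Function.update r1 k (r1 k + 1) = n ∧ r2 = m
  · obtain ⟨h1, h2⟩ := h
    have hnk : n k = r1 k + 1 := by rw [← h1, Function.update_self]
    have hr1 : r1 = Function.update n k (n k - 1) := by
      funext i
      by_cases hik : i = k
      · subst hik
        rw [Function.update_self, hnk]
        omega
      · rw [Function.update_of_ne hik, ← h1, Function.update_of_ne hik]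
    have hSx : Sx ℓ (k : ℕ) r1 = Sx ℓ (k : ℕ) n := by
      refine Sx_congr fun i hi => ?_
      have hik : i ≠ k := fun he => by subst he; omega
      rw [← h1, Function.update_of_ne hik]
    rw [if_pos (show ((n, m) : (Fin ℓ → ℕ) × ℤ) = (Function.update r1 k (r1 k + 1), r2)
          from by rw [h1, h2]),
      if_pos (show ((Function.update n k (n k - 1), m) : (Fin ℓ → ℕ) × ℤ) = (r1, r2)
          from by rw [← hr1, h2]),
      hSx, hnk]
  · have c1 : ¬ (((n, m) : (Fin ℓ → ℕ) × ℤ) = (Function.update r1 k (r1 k + 1), r2)) := by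
      intro he
      rw [Prod.mk.injEq] at he
      exact h ⟨he.1.symm, he.2.symm⟩
    rw [if_neg c1, mul_zero]
    by_cases h2 : ((Function.update n k (n k - 1), m) : (Fin ℓ → ℕ) × ℤ) = (r1, r2)
    · rw [Prod.mk.injEq] at h2
      by_cases hn : n k = 0
      · rw [if_pos (Prod.ext h2.1 h2.2), mul_one]
        norm_num [hn]
      · exfalso
        apply h
        refine ⟨funext fun i => ?_, h2.2.symm⟩
        by_cases hik : i = k
        · subst hik
          rw [Function.update_self, ← h2.1, Function.update_self]
          omega
        · rw [Function.update_of_ne hik, ← h2.1, Function.update_of_ne hik]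
    · rw [if_neg h2, mul_zero]


lemma one_sub_pow_nonneg (hq : q ∈ Set.Ioo (0 : ℝ) 1) (e : ℕ) : 0 ≤ 1 - q ^ e := by
  have := pow_le_one₀ hq.1.le hq.2.le (n := e)
  linarith

/-- `Z j† Z j` on a basis vector, for `j ≥ 1`. -/
lemma QQj (hq : q ∈ Set.Ioo (0 : ℝ) 1)
    (hZj : ∀ (j : Fin (ℓ + 1)) (hj : 1 ≤ (j : ℕ)) (k : Fin ℓ), (k : ℕ) = ℓ - (j : ℕ) →
      ∀ (n : Fin ℓ → ℕ) (m : ℤ),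
      Z j (eVec ℓ (n, m))
        = (((q ^ (Sx ℓ (k : ℕ) n) * Real.sqrt (1 - q ^ (2 * (n k + 1)))) : ℝ) : ℂ)
          • eVec ℓ (Function.update n k (n k + 1), m))
    (j : Fin (ℓ + 1)) (hj : 1 ≤ (j : ℕ)) (k : Fin ℓ) (hk : (k : ℕ) = ℓ - (j : ℕ))
    (n : Fin ℓ → ℕ) (m : ℤ) :
    (ContinuousLinearMap.adjoint (Z j) ∘L Z j) (eVec ℓ (n, m))
      = (((q ^ (2 * Sx ℓ (k : ℕ) n) * (1 - q ^ (2 * (n k + 1)))) : ℝ) : ℂ)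
        • eVec ℓ (n, m) := by
  rw [ContinuousLinearMap.comp_apply, hZj j hj k hk n m, map_smul,
    adjj hZj j hj k hk (Function.update n k (n k + 1)) m]
  have e1 : Function.update n k (n k + 1) k = n k + 1 := Function.update_self _ _ _
  have e2 : Sx ℓ (k : ℕ) (Function.update n k (n k + 1)) = Sx ℓ (k : ℕ) n :=
    Sx_update n k _ (lt_irrefl _)
  rw [e1, e2, Nat.add_sub_cancel, Function.update_idem, Function.update_eq_self, smul_smul]
  congr 1
  rw [← Complex.ofReal_mul]
  congr 1
  have h2 := Real.mul_self_sqrt (one_sub_pow_nonneg hq (2 * (n k + 1)))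
  linear_combination (q ^ Sx ℓ (k : ℕ) n * q ^ Sx ℓ (k : ℕ) n) * h2

/-- `Z j Z j†` on a basis vector, for `j ≥ 1`. -/
lemma PPj (hq : q ∈ Set.Ioo (0 : ℝ) 1)
    (hZj : ∀ (j : Fin (ℓ + 1)) (hj : 1 ≤ (j : ℕ)) (k : Fin ℓ), (k : ℕ) = ℓ - (j : ℕ) →
      ∀ (n : Fin ℓ → ℕ) (m : ℤ),
      Z j (eVec ℓ (n, m))
        = (((q ^ (Sx ℓ (k : ℕ) n) * Real.sqrt (1 - q ^ (2 * (n k + 1)))) : ℝ) : ℂ)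
          • eVec ℓ (Function.update n k (n k + 1), m))
    (j : Fin (ℓ + 1)) (hj : 1 ≤ (j : ℕ)) (k : Fin ℓ) (hk : (k : ℕ) = ℓ - (j : ℕ))
    (n : Fin ℓ → ℕ) (m : ℤ) :
    (Z j ∘L ContinuousLinearMap.adjoint (Z j)) (eVec ℓ (n, m))
      = (((q ^ (2 * Sx ℓ (k : ℕ) n) * (1 - q ^ (2 * n k))) : ℝ) : ℂ)
        • eVec ℓ (n, m) := by
  rw [ContinuousLinearMap.comp_apply, adjj hZj j hj k hk n m]
  by_cases hn : n k = 0
  · rw [hn]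
    norm_num
  · rw [map_smul, hZj j hj k hk _ m,
      Function.update_self, Sx_update n k _ (lt_irrefl _),
      show n k - 1 + 1 = n k from by omega, Function.update_idem,
      Function.update_eq_self, smul_smul]
    congr 1
    rw [← Complex.ofReal_mul]
    congr 1
    have h2 := Real.mul_self_sqrt (one_sub_pow_nonneg hq (2 * n k))
    linear_combination (q ^ Sx ℓ (k : ℕ) n * q ^ Sx ℓ (k : ℕ) n) * h2

/-- `Z 0 Z 0†` on a basis vector. -/
lemma PP0 (hZ0 : ∀ (n : Fin ℓ → ℕ) (m : ℤ),
      Z 0 (eVec ℓ (n, m)) = ((q : ℂ) ^ (∑ i, n i)) • eVec ℓ (n, m + 1))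
    (n : Fin ℓ → ℕ) (m : ℤ) :
    (Z 0 ∘L ContinuousLinearMap.adjoint (Z 0)) (eVec ℓ (n, m))
      = (((q ^ (2 * Sx ℓ ℓ n)) : ℝ) : ℂ) • eVec ℓ (n, m) := by
  rw [ContinuousLinearMap.comp_apply, adj0 hZ0 n m, map_smul, hZ0 n (m - 1), smul_smul,
    sub_add_cancel]
  congr 1
  push_cast [Sx_top]
  ring

/-- `Z 0† Z 0` on a basis vector. -/
lemma QQ0 (hZ0 : ∀ (n : Fin ℓ → ℕ) (m : ℤ),
      Z 0 (eVec ℓ (n, m)) = ((q : ℂ) ^ (∑ i, n i)) • eVec ℓ (n, m + 1))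
    (n : Fin ℓ → ℕ) (m : ℤ) :
    (ContinuousLinearMap.adjoint (Z 0) ∘L Z 0) (eVec ℓ (n, m))
      = (((q ^ (2 * Sx ℓ ℓ n)) : ℝ) : ℂ) • eVec ℓ (n, m) := by
  rw [ContinuousLinearMap.comp_apply, hZ0 n m, map_smul, adj0 hZ0 n (m + 1), smul_smul,
    add_sub_cancel_right]
  congr 1
  push_cast [Sx_top]
  ring


lemma Sx_zero (n : Fin ℓ → ℕ) : Sx ℓ 0 n = 0 := by
  rw [Sx]
  simp

/-- The telescoping sum of the coefficients. -/
lemma telescope (q : ℝ) (n : Fin ℓ → ℕ) :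
    ∀ j, j ≤ ℓ → ∑ i ∈ Finset.univ.filter (fun i : Fin (ℓ + 1) => (i : ℕ) ≤ j),
      (if (i : ℕ) = 0 then q ^ (2 * Sx ℓ ℓ n) else
        q ^ (2 * Sx ℓ (ℓ - (i : ℕ)) n) - q ^ (2 * Sx ℓ (ℓ - (i : ℕ) + 1) n))
      = q ^ (2 * Sx ℓ (ℓ - j) n) := by
  intro j
  induction j with
  | zero =>
    intro _
    have hf : Finset.univ.filter (fun i : Fin (ℓ + 1) => (i : ℕ) ≤ 0)
        = {(0 : Fin (ℓ + 1))} := by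
      ext i
      simp only [Finset.mem_filter, Finset.mem_univ, true_and, Finset.mem_singleton,
        Fin.ext_iff, Fin.val_zero]
      omega
    rw [hf, Finset.sum_singleton]
    simp
  | succ j ih =>
    intro hj
    have hf : Finset.univ.filter (fun i : Fin (ℓ + 1) => (i : ℕ) ≤ j + 1)
        = insert (⟨j + 1, by omega⟩ : Fin (ℓ + 1))
            (Finset.univ.filter (fun i : Fin (ℓ + 1) => (i : ℕ) ≤ j)) := by
      ext i
      simp only [Finset.mem_filter, Finset.mem_univ, true_and, Finset.mem_insert, Fin.ext_iff]
      omega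
    rw [hf, Finset.sum_insert (by simp), ih (by omega), if_neg (by simp),
      show ℓ - (j + 1) + 1 = ℓ - j from by omega]
    ring

end SphereAux


open SphereAux

/-- The operators `Z₁,…,Z_N` on `ℓ²((ℕ^ℓ) × ℤ)` satisfy
`Z_{j+1}* Z_{j+1} − Z_{j+1} Z_{j+1}* = (1−q²) Σ_{i=1}^{j} Z_i Z_i*` for `j ∈ {1,…,ℓ}`,
`Z₁* Z₁ = Z₁ Z₁*`, and `Σ_{i=1}^{N} Z_i Z_i* = 1`.
(The indices of `Z` and `n` are shifted to start at `0`.) -/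
theorem sphere_operator_relations
    (q : ℝ) (hq : q ∈ Set.Ioo (0 : ℝ) 1) (ℓ : ℕ) (hℓ : 1 ≤ ℓ)
    (Z : Fin (ℓ + 1) → (Hsp ℓ →L[ℂ] Hsp ℓ))
    (hZ0 : ∀ (n : Fin ℓ → ℕ) (m : ℤ),
      Z 0 (eVec ℓ (n, m)) = ((q : ℂ) ^ (∑ i, n i)) • eVec ℓ (n, m + 1))
    (hZj : ∀ (j : Fin (ℓ + 1)) (hj : 1 ≤ (j : ℕ)) (n : Fin ℓ → ℕ) (m : ℤ),
      Z j (eVec ℓ (n, m))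
        = (((q : ℂ) ^ (∑ i ∈ Finset.univ.filter (fun i : Fin ℓ => (i : ℕ) < ℓ - (j : ℕ)), n i))
            * ((Real.sqrt (1 - q ^ (2 * (n ⟨ℓ - (j : ℕ), by have := j.isLt; omega⟩ + 1))) : ℝ) : ℂ))
          • eVec ℓ (Function.update n ⟨ℓ - (j : ℕ), by have := j.isLt; omega⟩
              (n ⟨ℓ - (j : ℕ), by have := j.isLt; omega⟩ + 1), m)) :
    (∀ j : Fin ℓ,
      ContinuousLinearMap.adjoint (Z j.succ) ∘L Z j.succ
          - Z j.succ ∘L ContinuousLinearMap.adjoint (Z j.succ)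
        = (1 - (q : ℂ) ^ 2) •
            ∑ i ∈ Finset.univ.filter (fun i : Fin (ℓ + 1) => (i : ℕ) ≤ (j : ℕ)),
              Z i ∘L ContinuousLinearMap.adjoint (Z i)) ∧
    (ContinuousLinearMap.adjoint (Z 0) ∘L Z 0 = Z 0 ∘L ContinuousLinearMap.adjoint (Z 0)) ∧
    (∑ i : Fin (ℓ + 1), Z i ∘L ContinuousLinearMap.adjoint (Z i) = 1) := by
  classical
  have hZj' : ∀ (j : Fin (ℓ + 1)), 1 ≤ (j : ℕ) → ∀ (k : Fin ℓ), (k : ℕ) = ℓ - (j : ℕ) →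
      ∀ (n : Fin ℓ → ℕ) (m : ℤ),
      Z j (eVec ℓ (n, m))
        = (((q ^ (Sx ℓ (k : ℕ) n) * Real.sqrt (1 - q ^ (2 * (n k + 1)))) : ℝ) : ℂ)
          • eVec ℓ (Function.update n k (n k + 1), m) :=
    fun j hj k hk n m => SphereAux.hZj' hZj j hj k hk n m
  have PPall : ∀ (i : Fin (ℓ + 1)) (n : Fin ℓ → ℕ) (m : ℤ),
      (Z i ∘L ContinuousLinearMap.adjoint (Z i)) (eVec ℓ (n, m))
        = (((if (i : ℕ) = 0 then q ^ (2 * Sx ℓ ℓ n) else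
            q ^ (2 * Sx ℓ (ℓ - (i : ℕ)) n) - q ^ (2 * Sx ℓ (ℓ - (i : ℕ) + 1) n)) : ℝ) : ℂ)
          • eVec ℓ (n, m) := by
    intro i n m
    by_cases hi : (i : ℕ) = 0
    · rw [if_pos hi, show i = 0 from Fin.ext hi]
      exact PP0 hZ0 n m
    · have hj1 : 1 ≤ (i : ℕ) := by omega
      have hlt : ℓ - (i : ℕ) < ℓ := by have := i.isLt; omega
      rw [if_neg hi, PPj hq hZj' i hj1 ⟨ℓ - (i : ℕ), hlt⟩ rfl n m]
      have hsx : q ^ (2 * Sx ℓ (ℓ - (i : ℕ)) n)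
            * (1 - q ^ (2 * n (⟨ℓ - (i : ℕ), hlt⟩ : Fin ℓ)))
          = q ^ (2 * Sx ℓ (ℓ - (i : ℕ)) n) - q ^ (2 * Sx ℓ (ℓ - (i : ℕ) + 1) n) := by
        rw [Sx_succ hlt n]
        ring
      rw [hsx]
  refine ⟨?_, ?_, ?_⟩
  · intro j
    apply cext
    rintro ⟨n, m⟩
    have hj1 : 1 ≤ (j.succ : ℕ) := by simp [Fin.val_succ]
    have hlt : ℓ - ((j.succ : ℕ)) < ℓ := by have := j.isLt; rw [Fin.val_succ]; omega
    have hsum : ∑ i ∈ Finset.univ.filter (fun i : Fin (ℓ + 1) => (i : ℕ) ≤ (j : ℕ)),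
        (Z i ∘L ContinuousLinearMap.adjoint (Z i)) (eVec ℓ (n, m))
        = ((q ^ (2 * Sx ℓ (ℓ - (j : ℕ)) n) : ℝ) : ℂ) • eVec ℓ (n, m) := by
      rw [Finset.sum_congr rfl fun i _ => PPall i n m, ← Finset.sum_smul, ← Complex.ofReal_sum,
        telescope q n (j : ℕ) (by have := j.isLt; omega)]
    rw [ContinuousLinearMap.sub_apply,
      QQj hq hZj' j.succ hj1 ⟨ℓ - (j.succ : ℕ), hlt⟩ rfl n m,
      PPj hq hZj' j.succ hj1 ⟨ℓ - (j.succ : ℕ), hlt⟩ rfl n m,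
      ContinuousLinearMap.smul_apply, ContinuousLinearMap.sum_apply, hsum,
      ← sub_smul, smul_smul, ← Complex.ofReal_sub]
    congr 1
    have hreal : q ^ (2 * Sx ℓ (ℓ - (j.succ : ℕ)) n)
          * (1 - q ^ (2 * (n (⟨ℓ - (j.succ : ℕ), hlt⟩ : Fin ℓ) + 1)))
        - q ^ (2 * Sx ℓ (ℓ - (j.succ : ℕ)) n)
          * (1 - q ^ (2 * n (⟨ℓ - (j.succ : ℕ), hlt⟩ : Fin ℓ)))
        = (1 - q ^ 2) * q ^ (2 * Sx ℓ (ℓ - (j : ℕ)) n) := by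
      rw [show ℓ - (j : ℕ) = (ℓ - (j.succ : ℕ)) + 1 from by
          have := j.isLt; rw [Fin.val_succ]; omega,
        Sx_succ hlt n]
      ring
    rw [hreal]
    push_cast
    ring
  · apply cext
    rintro ⟨n, m⟩
    rw [QQ0 hZ0 n m, PP0 hZ0 n m]
  · apply cext
    rintro ⟨n, m⟩
    have hstep : ∑ i : Fin (ℓ + 1), (Z i ∘L ContinuousLinearMap.adjoint (Z i)) (eVec ℓ (n, m))
        = ∑ i ∈ Finset.univ.filter (fun i : Fin (ℓ + 1) => (i : ℕ) ≤ ℓ),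
            (((if (i : ℕ) = 0 then q ^ (2 * Sx ℓ ℓ n) else
              q ^ (2 * Sx ℓ (ℓ - (i : ℕ)) n) - q ^ (2 * Sx ℓ (ℓ - (i : ℕ) + 1) n)) : ℝ) : ℂ)
              • eVec ℓ (n, m) :=
      Finset.sum_congr
        (Finset.filter_true_of_mem (fun i _ => by have := i.isLt; omega)).symm
        (fun i _ => PPall i n m)
    rw [ContinuousLinearMap.sum_apply, ContinuousLinearMap.one_apply, hstep,
      ← Finset.sum_smul, ← Complex.ofReal_sum, telescope q n ℓ le_rfl, Nat.sub_self,
      Sx_zero, mul_zero, pow_zero, Complex.ofReal_one, one_smul]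

end
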